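/- For every finite connected graph G and any start vertex s, R_s(G) ≤ 3·tb(G): in any tree-decomposition of G of breadth ρ, every cluster of the layering partition LP(G,s) is contained in a ball of radius 3ρ of G. -/

import Mathlib

open SimpleGraph

/-- Abstract separation lemma along a walk. -/
lemma sep_aux {V ι : Type} {G : SimpleGraph V} {X : ι → Set V} (J K : ι → Prop) (C : V → Prop)
    (hedge : ∀ a b, G.Adj a b → ∃ m, a ∈ X m ∧ b ∈ X m)
    (hexh : ∀ m, J m ∨ K m)
    (hcross : ∀ x m1 m2, x ∈ X m1 → J m1 → x ∈ X m2 → K m2 → C x) :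
    ∀ {x v : V} (w : G.Walk x v), (∃ m, x ∈ X m ∧ J m) → (∃ m, v ∈ X m ∧ K m) →
      ∃ a ∈ w.support, C a := by
  intro x v w
  induction w with
  | nil =>
    rintro ⟨m1, hx1, hJ⟩ ⟨m2, hx2, hK⟩
    exact ⟨_, Walk.start_mem_support _, hcross _ m1 m2 hx1 hJ hx2 hK⟩
  | @cons x y v h w ih =>
    rintro ⟨m1, hx1, hJ⟩ hv
    by_cases hxK : ∃ m, x ∈ X m ∧ K m
    · obtain ⟨m2, hx2, hK⟩ := hxK
      exact ⟨x, Walk.start_mem_support _, hcross _ m1 m2 hx1 hJ hx2 hK⟩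
    · obtain ⟨m, hxm, hym⟩ := hedge x y h
      have hJm : J m := (hexh m).resolve_right fun hK => hxK ⟨m, hxm, hK⟩
      obtain ⟨a, ha, hCa⟩ := ih ⟨m, hym, hJm⟩ hv
      exact ⟨a, by simp [ha], hCa⟩

/-- Find the first edge on a walk crossing from `¬Q` to `Q`. -/
lemma find_aux {ι : Type} {T : SimpleGraph ι} (Q : ι → Prop) :
    ∀ {a b : ι} (p : T.Walk a b), ¬ Q a → Q b →
    ∃ (j k : ι) (hjk : T.Adj j k) (p1 : T.Walk a j) (p2 : T.Walk k b),
      p1.append (Walk.cons hjk p2) = p ∧ (∀ m ∈ p1.support, ¬ Q m) ∧ Q k := by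
  intro a b p
  induction p with
  | nil => intro ha hb; exact absurd hb ha
  | @cons a c b h q ih =>
    intro ha hb
    by_cases hc : Q c
    · exact ⟨a, c, h, Walk.nil, q, by simp, by simpa using ha, hc⟩
    · obtain ⟨j, k, hjk, p1, p2, heq, hall, hQk⟩ := ih hc hb
      refine ⟨j, k, hjk, Walk.cons h p1, p2, by simp [heq], ?_, hQk⟩
      intro m hm
      rw [Walk.support_cons, List.mem_cons] at hm
      rcases hm with rfl | hm
      · exact ha
      · exact hall m hm

/-- In a connected graph, after removing one edge, every vertex is reachable from
one of the two endpoints of the removed edge. -/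
lemma side_aux {ι : Type} {T : SimpleGraph ι} {j k : ι} :
    ∀ {x m : ι} (_ : T.Walk x m),
      ((T.deleteEdges {s(j,k)}).Reachable j x ∨ (T.deleteEdges {s(j,k)}).Reachable k x) →
      ((T.deleteEdges {s(j,k)}).Reachable j m ∨ (T.deleteEdges {s(j,k)}).Reachable k m) := by
  intro x m w
  induction w with
  | nil => exact id
  | @cons x y m h q ih =>
    intro hx
    apply ih
    by_cases he : s(x, y) = s(j, k)
    · rw [Sym2.eq_iff] at he
      rcases he with ⟨rfl, rfl⟩ | ⟨rfl, rfl⟩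
      · exact Or.inr (Reachable.refl _)
      · exact Or.inl (Reachable.refl _)
    · have hadj : (T.deleteEdges {s(j,k)}).Adj x y := by
        rw [deleteEdges_adj]; exact ⟨h, by simpa using he⟩
      exact hx.imp (fun r => r.trans hadj.reachable) (fun r => r.trans hadj.reachable)
/-- Two vertices are in the same cluster of the layering partition `LP(G,s)` iff they
are in the same layer (same distance from `s`) and are joined by a walk all of whose
vertices are at distance at least that layer index from `s`. -/
def SameCluster {V : Type*} (G : SimpleGraph V) (s u v : V) : Prop :=
  G.dist s u = G.dist s v ∧
    ∃ p : G.Walk u v, ∀ w ∈ p.support, G.dist s u ≤ G.dist s w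

/-- The cluster-diameter `Δ_s(G)`: the largest diameter (in `d_G`) of a cluster of the
layering partition `LP(G,s)`. -/
noncomputable def clusterDiameter {V : Type*} (G : SimpleGraph V) (s : V) : ℕ :=
  sSup {n : ℕ | ∃ u v, SameCluster G s u v ∧ G.dist u v = n}

/-- The cluster-radius `R_s(G)`: the smallest `r` such that every cluster of the
layering partition `LP(G,s)` is contained in some ball of radius `r` of `G`. -/
noncomputable def clusterRadius {V : Type*} (G : SimpleGraph V) (s : V) : ℕ :=
  sInf {r : ℕ | ∀ u, ∃ c, ∀ v, SameCluster G s u v → G.dist c v ≤ r}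

/-- A tree-decomposition of a graph `G`: a tree `T` on an index type whose nodes carry
bags `X i ⊆ V` covering all vertices and all edges, such that the bags containing any
fixed vertex form a connected subtree of `T` (here: every node on the (unique) path of
`T` between two bags containing `v` also contains `v`). -/
def IsTreeDecomp {V : Type} {ι : Type} (G : SimpleGraph V) (T : SimpleGraph ι)
    (X : ι → Set V) : Prop :=
  T.IsTree ∧
  (∀ v, ∃ i, v ∈ X i) ∧
  (∀ u v, G.Adj u v → ∃ i, u ∈ X i ∧ v ∈ X i) ∧
  (∀ (v : V) (i j : ι), v ∈ X i → v ∈ X j →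
    ∀ p : T.Walk i j, p.IsPath → ∀ k ∈ p.support, v ∈ X k)

/-- The tree-length `tl(G)`: the least `ℓ` such that `G` has a tree-decomposition all
of whose bags have `d_G`-diameter at most `ℓ`. -/
noncomputable def treeLength {V : Type} (G : SimpleGraph V) : ℕ :=
  sInf {ℓ : ℕ | ∃ (ι : Type) (T : SimpleGraph ι) (X : ι → Set V),
    IsTreeDecomp G T X ∧ ∀ i, ∀ u ∈ X i, ∀ v ∈ X i, G.dist u v ≤ ℓ}

/-- The tree-breadth `tb(G)`: the least `r` such that `G` has a tree-decomposition all
of whose bags are contained in balls of radius `r` of `G`. -/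
noncomputable def treeBreadth {V : Type} (G : SimpleGraph V) : ℕ :=
  sInf {r : ℕ | ∃ (ι : Type) (T : SimpleGraph ι) (X : ι → Set V),
    IsTreeDecomp G T X ∧ ∀ i, ∃ c, ∀ u ∈ X i, G.dist u c ≤ r}

/-- In any tree-decomposition of `G` of breadth `ρ`, every cluster of the layering
partition `LP(G,s)` is contained in a ball of radius `3ρ` of `G`; consequently
`R_s(G) ≤ 3·tb(G)`. -/
theorem clusterRadius_le_three_mul_treeBreadth {V : Type} [Fintype V]
    (G : SimpleGraph V) (hG : G.Connected) (s : V) :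
    (∀ (ι : Type) (T : SimpleGraph ι) (X : ι → Set V) (ρ : ℕ),
      IsTreeDecomp G T X → (∀ i, ∃ c, ∀ u ∈ X i, G.dist u c ≤ ρ) →
      ∀ u : V, ∃ c : V, ∀ v, SameCluster G s u v → G.dist v c ≤ 3 * ρ) ∧
    clusterRadius G s ≤ 3 * treeBreadth G := by
  classical
  have main : ∀ (ι : Type) (T : SimpleGraph ι) (X : ι → Set V) (ρ : ℕ),
      IsTreeDecomp G T X → (∀ i, ∃ c, ∀ u ∈ X i, G.dist u c ≤ ρ) →
      ∀ u : V, ∃ c : V, ∀ v, SameCluster G s u v → G.dist v c ≤ 3 * ρ := by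
    intro ι T X ρ htd hbag u
    obtain ⟨htree, hcov, hedge, hsub⟩ := htd
    set i := G.dist s u with hi
    set A : Set V := {w | ∃ p : G.Walk u w, ∀ x ∈ p.support, i ≤ G.dist s x} with hA
    have huA : u ∈ A := ⟨Walk.nil, by
      intro x hx
      simp only [Walk.support_nil, List.mem_singleton] at hx
      subst hx; exact le_rfl⟩
    have hAdist : ∀ w ∈ A, i ≤ G.dist s w := by
      rintro w ⟨p, hp⟩; exact hp w p.end_mem_support
    by_cases h1 : ∃ m, s ∈ X m ∧ (X m ∩ A).Nonempty
    · obtain ⟨m, hsm, w0, hwX, hwA⟩ := h1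
      obtain ⟨c, hc⟩ := hbag m
      have hsw : i ≤ G.dist s w0 := hAdist w0 hwA
      have h2 : G.dist s w0 ≤ G.dist s c + G.dist c w0 := hG.dist_triangle (v := c)
      have h3 : G.dist s c ≤ ρ := hc s hsm
      have h4 : G.dist c w0 ≤ ρ := by rw [SimpleGraph.dist_comm]; exact hc w0 hwX
      refine ⟨s, fun v hv => ?_⟩
      have hv1 : i = G.dist s v := hv.1
      have h5 : G.dist v s = G.dist s v := SimpleGraph.dist_comm
      omega
    · obtain ⟨ts, hts⟩ := hcov s
      obtain ⟨tu, htu⟩ := hcov u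
      obtain ⟨p0⟩ := htree.isConnected.preconnected ts tu
      obtain ⟨p, hp⟩ : ∃ p : T.Walk ts tu, p.IsPath := ⟨p0.toPath, p0.toPath.2⟩
      have hQts : ¬ (X ts ∩ A).Nonempty := fun hq => h1 ⟨ts, hts, hq⟩
      obtain ⟨j, k, hjk, p1, p2, heq, hprefix, hQk⟩ :=
        find_aux (fun m => (X m ∩ A).Nonempty) p hQts ⟨u, htu, huA⟩
      have hnd : (p1.append (Walk.cons hjk p2)).edges.Nodup := by
        rw [heq]; exact hp.isTrail.edges_nodup
      rw [Walk.edges_append, Walk.edges_cons, List.nodup_append] at hnd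
      have hep1 : ∀ e ∈ p1.edges, e ∉ ({s(j,k)} : Set (Sym2 ι)) := by
        intro e he
        simp only [Set.mem_singleton_iff]
        rintro rfl
        exact hnd.2.2 _ he _ (by simp) rfl
      have hep2 : ∀ e ∈ p2.edges, e ∉ ({s(j,k)} : Set (Sym2 ι)) := by
        intro e he
        simp only [Set.mem_singleton_iff]
        rintro rfl
        exact (List.nodup_cons.mp hnd.2.1).1 he
      set T' := T.deleteEdges {s(j,k)} with hT'
      have hJts : T'.Reachable j ts := ⟨(p1.toDeleteEdges {s(j,k)} hep1).reverse⟩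
      have hKtu : T'.Reachable k tu := ⟨p2.toDeleteEdges {s(j,k)} hep2⟩
      have hbridge : ¬ T'.Reachable j k := by
        have hb := (isAcyclic_iff_forall_adj_isBridge.mp htree.IsAcyclic) hjk
        exact hb
      have hexh : ∀ m, T'.Reachable j m ∨ T'.Reachable k m := fun m =>
        side_aux ((htree.isConnected.preconnected j m).some) (Or.inl (Reachable.refl _))
      have hcross : ∀ x m1 m2, x ∈ X m1 → T'.Reachable j m1 → x ∈ X m2 →
          T'.Reachable k m2 → x ∈ X j ∧ x ∈ X k := by
        intro x m1 m2 hx1 hJ hx2 hK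
        obtain ⟨q0⟩ := htree.isConnected.preconnected m1 m2
        obtain ⟨q, hq⟩ : ∃ q : T.Walk m1 m2, q.IsPath := ⟨q0.toPath, q0.toPath.2⟩
        have hin : s(j,k) ∈ q.edges := by
          by_contra hne
          have hreach : T'.Reachable m1 m2 :=
            ⟨q.toDeleteEdges {s(j,k)} (fun e he hmem => hne (Set.mem_singleton_iff.mp hmem ▸ he))⟩
          exact hbridge (hJ.trans (hreach.trans hK.symm))
        exact ⟨hsub x m1 m2 hx1 hx2 q hq j (Walk.fst_mem_support_of_mem_edges _ hin),
               hsub x m1 m2 hx1 hx2 q hq k (Walk.snd_mem_support_of_mem_edges _ hin)⟩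
      have hQkK : ∀ m, (X m ∩ A).Nonempty → T'.Reachable k m := by
        rintro m ⟨w1, hw1X, hw1A⟩
        rcases hexh m with hJ | hK
        · exfalso
          obtain ⟨q, hqd⟩ := hw1A
          obtain ⟨a, ha, haj, hak⟩ := sep_aux (T'.Reachable j) (T'.Reachable k)
            (fun x => x ∈ X j ∧ x ∈ X k) hedge hexh hcross q.reverse
            ⟨m, hw1X, hJ⟩ ⟨tu, htu, hKtu⟩
          rw [Walk.support_reverse, List.mem_reverse] at ha
          have haA : a ∈ A :=
            ⟨q.takeUntil a ha, fun x hx => hqd x (q.support_takeUntil_subset ha hx)⟩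
          exact hprefix j p1.end_mem_support ⟨a, haj, haA⟩
        · exact hK
      obtain ⟨c, hc⟩ := hbag k
      obtain ⟨w0, hw0X, hw0A⟩ := hQk
      refine ⟨c, fun v hv => ?_⟩
      obtain ⟨hv1, pv, hpv⟩ := hv
      have hvA : v ∈ A := ⟨pv, hpv⟩
      obtain ⟨mv, hvmv⟩ := hcov v
      have hKmv := hQkK mv ⟨v, hvmv, hvA⟩
      obtain ⟨r, hr⟩ := (hG.preconnected s v).exists_walk_length_eq_dist
      obtain ⟨a, ha, haj, hak⟩ := sep_aux (T'.Reachable j) (T'.Reachable k)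
        (fun x => x ∈ X j ∧ x ∈ X k) hedge hexh hcross r ⟨ts, hts, hJts⟩ ⟨mv, hvmv, hKmv⟩
      have hsa : G.dist s a ≤ (r.takeUntil a ha).length := SimpleGraph.dist_le _
      have hav : G.dist a v ≤ (r.dropUntil a ha).length := SimpleGraph.dist_le _
      have hlen : (r.takeUntil a ha).length + (r.dropUntil a ha).length = r.length := by
        rw [← Walk.length_append, Walk.take_spec]
      have hiv : i = G.dist s v := hv1
      have h6 : i ≤ G.dist s w0 := hAdist w0 hw0A
      have h7 : G.dist s w0 ≤ G.dist s a + G.dist a w0 := hG.dist_triangle (v := a)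
      have h8 : G.dist a w0 ≤ G.dist a c + G.dist c w0 := hG.dist_triangle (v := c)
      have h9 : G.dist a c ≤ ρ := hc a hak
      have h10 : G.dist c w0 ≤ ρ := by rw [SimpleGraph.dist_comm]; exact hc w0 hw0X
      have h11 : G.dist v c ≤ G.dist v a + G.dist a c := hG.dist_triangle (v := a)
      have h12 : G.dist v a = G.dist a v := SimpleGraph.dist_comm
      omega
  refine ⟨main, ?_⟩
  have hmem : (Finset.univ.sup fun u => G.dist u s) ∈ {r : ℕ | ∃ (ι : Type) (T : SimpleGraph ι)
      (X : ι → Set V), IsTreeDecomp G T X ∧ ∀ i, ∃ c, ∀ u ∈ X i, G.dist u c ≤ r} := by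
    refine ⟨Unit, ⊥, fun _ => Set.univ, ⟨⟨Connected.mk (fun a b => by cases a; cases b; exact Reachable.refl _), isAcyclic_bot⟩,
      fun v => ⟨(), trivial⟩, fun a b _ => ⟨(), trivial, trivial⟩,
      fun v i j _ _ p _ k _ => trivial⟩, fun _ => ⟨s, fun u _ => Finset.le_sup (f := fun u => G.dist u s) (Finset.mem_univ u)⟩⟩
  have htb : treeBreadth G ∈ {r : ℕ | ∃ (ι : Type) (T : SimpleGraph ι)
      (X : ι → Set V), IsTreeDecomp G T X ∧ ∀ i, ∃ c, ∀ u ∈ X i, G.dist u c ≤ r} :=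
    Nat.sInf_mem ⟨_, hmem⟩
  obtain ⟨ι, T, X, htd, hb⟩ := htb
  refine Nat.sInf_le ?_
  intro u
  obtain ⟨c, hc⟩ := main ι T X (treeBreadth G) htd hb u
  exact ⟨c, fun v hv => by rw [SimpleGraph.dist_comm]; exact hc v hv⟩
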